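/- Let (d_n)_{n≥1} be a sequence of positive integers and for each n let A_n be a strictly positive d_n × d_{n+1} real matrix. Suppose there is D_0 > 0 such that D(A_n) ≤ D_0 for all n, where D(A) is the Hilbert-metric diameter of the image of the positive cone under A. Then the inverse limit {(x^{(n)})_{n≥1} ∈ Π_n (ℝ_{≥0})^{d_n} : x^{(n)} = A_n x^{(n+1)} for all n} is a ray: there exist vectors x^{(n)} ∈ (ℝ_{≥0})^{d_n} such that the inverse limit equals {(λ x^{(n)})_{n≥1} : λ ≥ 0}. -/

import Mathlib

noncomputable def hilbertTheta {m : Type*} [Fintype m] (x x' : m → ℝ) : ℝ :=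
  Real.log (sInf {μ : ℝ | 0 < μ ∧ ∀ i, x' i ≤ μ * x i} /
    sSup {l : ℝ | 0 < l ∧ ∀ i, l * x i ≤ x' i})

noncomputable def hilbertDiam {m n : Type*} [Fintype m] [Fintype n]
    (A : Matrix m n ℝ) : ℝ :=
  sSup {t : ℝ | ∃ y y' : n → ℝ, (∀ j, 0 ≤ y j) ∧ y ≠ 0 ∧ (∀ j, 0 ≤ y' j) ∧ y' ≠ 0 ∧
    t = hilbertTheta (A.mulVec y) (A.mulVec y')}

section aux

variable {m n : Type*} [Fintype m] [Fintype n]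

noncomputable def rmax [Nonempty m] (u v : m → ℝ) : ℝ :=
  Finset.univ.sup' Finset.univ_nonempty (fun i => u i / v i)

noncomputable def rmin [Nonempty m] (u v : m → ℝ) : ℝ :=
  Finset.univ.inf' Finset.univ_nonempty (fun i => u i / v i)

set_option linter.unusedSectionVars false

lemma rmin_le [Nonempty m] (u v : m → ℝ) (i : m) : rmin u v ≤ u i / v i :=
  Finset.inf'_le (fun i => u i / v i) (Finset.mem_univ i)

lemma le_rmax [Nonempty m] (u v : m → ℝ) (i : m) : u i / v i ≤ rmax u v :=
  Finset.le_sup' (fun i => u i / v i) (Finset.mem_univ i)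

lemma rmax_le [Nonempty m] {u v : m → ℝ} {a : ℝ} (h : ∀ i, u i / v i ≤ a) : rmax u v ≤ a :=
  Finset.sup'_le _ _ fun i _ => h i

lemma le_rmin [Nonempty m] {u v : m → ℝ} {a : ℝ} (h : ∀ i, a ≤ u i / v i) : a ≤ rmin u v :=
  Finset.le_inf' _ _ fun i _ => h i

lemma rmin_le_rmax [Nonempty m] (u v : m → ℝ) : rmin u v ≤ rmax u v := by
  obtain ⟨i⟩ := ‹Nonempty m›
  exact le_trans (rmin_le u v i) (le_rmax u v i)

lemma rmin_pos [Nonempty m] {u v : m → ℝ} (hu : ∀ i, 0 < u i) (hv : ∀ i, 0 < v i) :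
    0 < rmin u v := by
  obtain ⟨i, _, h⟩ := Finset.exists_mem_eq_inf' (Finset.univ_nonempty) (fun i => u i / v i)
  rw [rmin, h]
  exact div_pos (hu i) (hv i)

lemma mulVec_pos {A : Matrix m n ℝ} (hA : ∀ i j, 0 < A i j) {y : n → ℝ}
    (hy : ∀ j, 0 ≤ y j) (hy0 : y ≠ 0) (i : m) : 0 < A.mulVec y i := by
  obtain ⟨j, hj⟩ : ∃ j, y j ≠ 0 := by
    by_contra h
    push_neg at h
    exact hy0 (funext h)
  have hj' : 0 < y j := lt_of_le_of_ne (hy j) (Ne.symm hj)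
  apply Finset.sum_pos' (fun k _ => mul_nonneg (hA i k).le (hy k))
  exact ⟨j, Finset.mem_univ j, mul_pos (hA i j) hj'⟩

lemma mulVec_eq_zero [Nonempty m] {A : Matrix m n ℝ} (hA : ∀ i j, 0 < A i j) {y : n → ℝ}
    (hy : ∀ j, 0 ≤ y j) (h : A.mulVec y = 0) : y = 0 := by
  by_contra hy0
  obtain ⟨i⟩ := ‹Nonempty m›
  have := mulVec_pos hA hy hy0 i
  rw [h] at this
  exact lt_irrefl 0 this


lemma hilbertTheta_eq [Nonempty m] {u v : m → ℝ} (hu : ∀ i, 0 < u i) (hv : ∀ i, 0 < v i) :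
    hilbertTheta u v = Real.log (rmax v u / rmin v u) := by
  have hrmax : 0 < rmax v u :=
    lt_of_lt_of_le (div_pos (hv (Classical.arbitrary m)) (hu _)) (le_rmax v u _)
  have hrmin : 0 < rmin v u := rmin_pos hv hu
  have h1 : {μ : ℝ | 0 < μ ∧ ∀ i, v i ≤ μ * u i} = Set.Ici (rmax v u) := by
    ext μ
    simp only [Set.mem_setOf_eq, Set.mem_Ici]
    constructor
    · rintro ⟨hμ, h⟩
      exact rmax_le fun i => (div_le_iff₀ (hu i)).2 (h i)
    · intro h
      refine ⟨lt_of_lt_of_le hrmax h, fun i => ?_⟩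
      have := le_trans (le_rmax v u i) h
      exact (div_le_iff₀ (hu i)).1 this
  have h2 : {l : ℝ | 0 < l ∧ ∀ i, l * u i ≤ v i} = Set.Ioc 0 (rmin v u) := by
    ext l
    simp only [Set.mem_setOf_eq, Set.mem_Ioc]
    constructor
    · rintro ⟨hl, h⟩
      exact ⟨hl, le_rmin fun i => (le_div_iff₀ (hu i)).2 (h i)⟩
    · rintro ⟨hl, h⟩
      refine ⟨hl, fun i => ?_⟩
      exact (le_div_iff₀ (hu i)).1 (le_trans h (rmin_le v u i))
  rw [hilbertTheta, h1, h2, csInf_Ici, csSup_Ioc hrmin]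

lemma ratio_bound [Nonempty m] [Nonempty n] {A : Matrix m n ℝ} (hA : ∀ i j, 0 < A i j)
    {D₀ : ℝ} (hdiam : hilbertDiam A ≤ D₀) {y y' : n → ℝ}
    (hy : ∀ j, 0 ≤ y j) (hy0 : y ≠ 0) (hy' : ∀ j, 0 ≤ y' j) (hy0' : y' ≠ 0) :
    rmax (A.mulVec y') (A.mulVec y) ≤ Real.exp D₀ * rmin (A.mulVec y') (A.mulVec y) := by
  classical
  set amax : ℝ := Finset.univ.sup' Finset.univ_nonempty
    (fun i => Finset.univ.sup' Finset.univ_nonempty (fun j => A i j)) with hamax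
  set amin : ℝ := Finset.univ.inf' Finset.univ_nonempty
    (fun i => Finset.univ.inf' Finset.univ_nonempty (fun j => A i j)) with hamin
  have hle : ∀ i j, amin ≤ A i j ∧ A i j ≤ amax := by
    intro i j
    constructor
    · exact le_trans (Finset.inf'_le _ (Finset.mem_univ i))
        (Finset.inf'_le (fun j => A i j) (Finset.mem_univ j))
    · exact le_trans (Finset.le_sup' (fun j => A i j) (Finset.mem_univ j))
        (Finset.le_sup' (fun i => Finset.univ.sup' Finset.univ_nonempty (fun j => A i j))
          (Finset.mem_univ i))
  have haminpos : 0 < amin := by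
    obtain ⟨i, -, hi⟩ := Finset.exists_mem_eq_inf' (Finset.univ_nonempty (α := m))
      (fun i => Finset.univ.inf' Finset.univ_nonempty (fun j => A i j))
    obtain ⟨j, -, hj⟩ := Finset.exists_mem_eq_inf' (Finset.univ_nonempty (α := n))
      (fun j => A i j)
    rw [hamin, hi, hj]; exact hA i j
  have hamaxpos : 0 < amax := lt_of_lt_of_le haminpos (le_trans (hle (Classical.arbitrary m)
    (Classical.arbitrary n)).1 (hle _ _).2)
  -- general estimate on images
  have himg : ∀ w : n → ℝ, (∀ j, 0 ≤ w j) → w ≠ 0 → ∀ i,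
      amin * (∑ j, w j) ≤ A.mulVec w i ∧ A.mulVec w i ≤ amax * (∑ j, w j) := by
    intro w hw hw0 i
    have h1 : A.mulVec w i = ∑ j, A i j * w j := rfl
    constructor
    · rw [h1, Finset.mul_sum]
      exact Finset.sum_le_sum fun j _ => mul_le_mul_of_nonneg_right (hle i j).1 (hw j)
    · rw [h1, Finset.mul_sum]
      exact Finset.sum_le_sum fun j _ => mul_le_mul_of_nonneg_right (hle i j).2 (hw j)
  have hsumpos : ∀ w : n → ℝ, (∀ j, 0 ≤ w j) → w ≠ 0 → 0 < ∑ j, w j := by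
    intro w hw hw0
    obtain ⟨j, hj⟩ : ∃ j, w j ≠ 0 := by
      by_contra h; push_neg at h; exact hw0 (funext h)
    exact Finset.sum_pos' (fun k _ => hw k) ⟨j, Finset.mem_univ j,
      lt_of_le_of_ne (hw j) (Ne.symm hj)⟩
  -- the set is bounded above
  have hbdd : BddAbove {t : ℝ | ∃ w w' : n → ℝ, (∀ j, 0 ≤ w j) ∧ w ≠ 0 ∧ (∀ j, 0 ≤ w' j) ∧
      w' ≠ 0 ∧ t = hilbertTheta (A.mulVec w) (A.mulVec w')} := by
    refine ⟨Real.log ((amax/amin)^2), ?_⟩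
    rintro t ⟨w, w', hw, hw0, hw', hw0', rfl⟩
    have hu : ∀ i, 0 < A.mulVec w i := mulVec_pos hA hw hw0
    have hv : ∀ i, 0 < A.mulVec w' i := mulVec_pos hA hw' hw0'
    rw [hilbertTheta_eq hu hv]
    have hs := hsumpos w hw hw0
    have hs' := hsumpos w' hw' hw0'
    have hrmax : rmax (A.mulVec w') (A.mulVec w) ≤ (amax * ∑ j, w' j) / (amin * ∑ j, w j) :=
      rmax_le fun i => div_le_div₀ (by positivity) (himg w' hw' hw0' i).2 (by positivity)
        (himg w hw hw0 i).1
    have hrmin : (amin * ∑ j, w' j) / (amax * ∑ j, w j) ≤ rmin (A.mulVec w') (A.mulVec w) :=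
      le_rmin fun i => div_le_div₀ (le_of_lt (hv i)) (himg w' hw' hw0' i).1 (hu i)
        (himg w hw hw0 i).2
    have hrminpos : 0 < rmin (A.mulVec w') (A.mulVec w) := rmin_pos hv hu
    have hq : rmax (A.mulVec w') (A.mulVec w) / rmin (A.mulVec w') (A.mulVec w) ≤
        (amax/amin)^2 := by
      have h0 : 0 < (amin * ∑ j, w' j) / (amax * ∑ j, w j) := by positivity
      calc rmax (A.mulVec w') (A.mulVec w) / rmin (A.mulVec w') (A.mulVec w)
          ≤ ((amax * ∑ j, w' j) / (amin * ∑ j, w j)) /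
            ((amin * ∑ j, w' j) / (amax * ∑ j, w j)) :=
            div_le_div₀ (by positivity) hrmax h0 hrmin
        _ = (amax/amin)^2 := by field_simp
    have hqpos : 0 < rmax (A.mulVec w') (A.mulVec w) / rmin (A.mulVec w') (A.mulVec w) :=
      div_pos (lt_of_lt_of_le hrminpos (rmin_le_rmax _ _)) hrminpos
    exact Real.log_le_log hqpos hq
  have hmem : hilbertTheta (A.mulVec y) (A.mulVec y') ∈ {t : ℝ | ∃ w w' : n → ℝ,
      (∀ j, 0 ≤ w j) ∧ w ≠ 0 ∧ (∀ j, 0 ≤ w' j) ∧ w' ≠ 0 ∧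
      t = hilbertTheta (A.mulVec w) (A.mulVec w')} := ⟨y, y', hy, hy0, hy', hy0', rfl⟩
  have hθ : hilbertTheta (A.mulVec y) (A.mulVec y') ≤ D₀ :=
    le_trans (le_csSup hbdd hmem) hdiam
  have hu : ∀ i, 0 < A.mulVec y i := mulVec_pos hA hy hy0
  have hv : ∀ i, 0 < A.mulVec y' i := mulVec_pos hA hy' hy0'
  rw [hilbertTheta_eq hu hv] at hθ
  have hrminpos : 0 < rmin (A.mulVec y') (A.mulVec y) := rmin_pos hv hu
  have hqpos : 0 < rmax (A.mulVec y') (A.mulVec y) / rmin (A.mulVec y') (A.mulVec y) :=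
    div_pos (lt_of_lt_of_le hrminpos (rmin_le_rmax _ _)) hrminpos
  have := (Real.log_le_iff_le_exp hqpos).1 hθ
  rw [div_le_iff₀ hrminpos] at this
  linarith [this]

lemma vec_ne_zero [Nonempty n] {v : n → ℝ} (hv : ∀ j, 0 < v j) : v ≠ 0 := by
  intro h
  have := hv (Classical.arbitrary n)
  rw [h] at this
  exact lt_irrefl 0 this

lemma rmax_mulVec_le [Nonempty m] [Nonempty n] {A : Matrix m n ℝ} (hA : ∀ i j, 0 < A i j)
    {u v : n → ℝ} (hu : ∀ j, 0 < u j) (hv : ∀ j, 0 < v j) :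
    rmax (A.mulVec u) (A.mulVec v) ≤ rmax u v := by
  have hAv : ∀ i, 0 < A.mulVec v i :=
    mulVec_pos hA (fun j => (hv j).le) (vec_ne_zero hv)
  refine rmax_le fun i => (div_le_iff₀ (hAv i)).2 ?_
  have h1 : A.mulVec u i = ∑ j, A i j * u j := rfl
  have h2 : rmax u v * A.mulVec v i = ∑ j, A i j * (rmax u v * v j) := by
    simp only [Matrix.mulVec, dotProduct, Finset.mul_sum]
    exact Finset.sum_congr rfl fun j _ => by ring
  rw [h1, h2]
  refine Finset.sum_le_sum fun j _ => mul_le_mul_of_nonneg_left ?_ (hA i j).le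
  exact (div_le_iff₀ (hv j)).1 (le_rmax u v j)

lemma rmin_le_mulVec [Nonempty m] [Nonempty n] {A : Matrix m n ℝ} (hA : ∀ i j, 0 < A i j)
    {u v : n → ℝ} (hu : ∀ j, 0 < u j) (hv : ∀ j, 0 < v j) :
    rmin u v ≤ rmin (A.mulVec u) (A.mulVec v) := by
  have hAv : ∀ i, 0 < A.mulVec v i :=
    mulVec_pos hA (fun j => (hv j).le) (vec_ne_zero hv)
  refine le_rmin fun i => (le_div_iff₀ (hAv i)).2 ?_
  have h1 : A.mulVec u i = ∑ j, A i j * u j := rfl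
  have h2 : rmin u v * A.mulVec v i = ∑ j, A i j * (rmin u v * v j) := by
    simp only [Matrix.mulVec, dotProduct, Finset.mul_sum]
    exact Finset.sum_congr rfl fun j _ => by ring
  rw [h1, h2]
  refine Finset.sum_le_sum fun j _ => mul_le_mul_of_nonneg_left ?_ (hA i j).le
  exact (le_div_iff₀ (hv j)).1 (rmin_le u v j)

lemma contraction_step [Nonempty m] [Nonempty n] {A : Matrix m n ℝ} (hA : ∀ i j, 0 < A i j)
    {K : ℝ} (hK : 1 ≤ K) {u v₀ : n → ℝ} (hu : ∀ j, 0 < u j) (hv : ∀ j, 0 < v₀ j)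
    (hcomp : ∀ w : n → ℝ, (∀ j, 0 ≤ w j) → w ≠ 0 →
      rmax (A.mulVec w) (A.mulVec v₀) ≤ K * rmin (A.mulVec w) (A.mulVec v₀)) :
    rmax (A.mulVec u) (A.mulVec v₀) - rmin (A.mulVec u) (A.mulVec v₀) ≤
      (1 - 1/K) * (rmax u v₀ - rmin u v₀) := by
  have hK0 : 0 < K := lt_of_lt_of_le one_pos hK
  have hθ : 0 ≤ 1 - 1/K := by
    have : 1/K ≤ 1 := by
      rw [div_le_one hK0]; exact hK
    linarith
  set M : ℝ := rmax u v₀ with hM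
  set m0 : ℝ := rmin u v₀ with hm0
  have hMm : m0 ≤ M := rmin_le_rmax u v₀
  have hAv : ∀ i, 0 < A.mulVec v₀ i :=
    mulVec_pos hA (fun j => (hv j).le) (vec_ne_zero hv)
  have hAu : ∀ i, 0 < A.mulVec u i :=
    mulVec_pos hA (fun j => (hu j).le) (vec_ne_zero hu)
  set w : n → ℝ := fun j => u j - m0 * v₀ j with hw
  set w' : n → ℝ := fun j => M * v₀ j - u j with hw'
  have hwnn : ∀ j, 0 ≤ w j := fun j => by
    have := (le_div_iff₀ (hv j)).1 (rmin_le u v₀ j)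
    simp only [hw]; linarith
  have hw'nn : ∀ j, 0 ≤ w' j := fun j => by
    have := (div_le_iff₀ (hv j)).1 (le_rmax u v₀ j)
    simp only [hw']; linarith
  -- pointwise decomposition of A u
  have hdecomp : ∀ i, A.mulVec u i = m0 * A.mulVec v₀ i + A.mulVec w i := by
    intro i
    simp only [Matrix.mulVec, dotProduct, hw, Finset.mul_sum, ← Finset.sum_add_distrib]
    exact Finset.sum_congr rfl fun j _ => by ring
  have hdecomp' : ∀ i, A.mulVec u i = M * A.mulVec v₀ i - A.mulVec w' i := by
    intro i
    simp only [Matrix.mulVec, dotProduct, hw', Finset.mul_sum, ← Finset.sum_sub_distrib]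
    exact Finset.sum_congr rfl fun j _ => by ring
  by_cases hw0 : w = 0
  · -- u = m0 • v₀, ratios constant
    have : ∀ i, A.mulVec u i / A.mulVec v₀ i = m0 := by
      intro i
      have h := hdecomp i
      rw [hw0] at h
      simp only [Matrix.mulVec_zero, Pi.zero_apply] at h
      rw [h, add_zero, mul_div_assoc, div_self (ne_of_gt (hAv i)), mul_one]
    have h1 : rmax (A.mulVec u) (A.mulVec v₀) = m0 :=
      le_antisymm (rmax_le fun i => (this i).le)
        (le_trans (ge_of_eq (this (Classical.arbitrary m))) (le_rmax _ _ _))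
    have h2 : rmin (A.mulVec u) (A.mulVec v₀) = m0 :=
      le_antisymm (le_trans (rmin_le _ _ (Classical.arbitrary m)) (le_of_eq (this _)))
        (le_rmin fun i => (this i).ge)
    rw [h1, h2]
    have : 0 ≤ (1 - 1/K) * (M - m0) := mul_nonneg hθ (by linarith)
    linarith
  by_cases hw'0 : w' = 0
  · have : ∀ i, A.mulVec u i / A.mulVec v₀ i = M := by
      intro i
      have h := hdecomp' i
      rw [hw'0] at h
      simp only [Matrix.mulVec_zero, Pi.zero_apply] at h
      rw [h, sub_zero, mul_div_assoc, div_self (ne_of_gt (hAv i)), mul_one]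
    have h1 : rmax (A.mulVec u) (A.mulVec v₀) = M :=
      le_antisymm (rmax_le fun i => (this i).le)
        (le_trans (ge_of_eq (this (Classical.arbitrary m))) (le_rmax _ _ _))
    have h2 : rmin (A.mulVec u) (A.mulVec v₀) = M :=
      le_antisymm (le_trans (rmin_le _ _ (Classical.arbitrary m)) (le_of_eq (this _)))
        (le_rmin fun i => (this i).ge)
    rw [h1, h2]
    have : 0 ≤ (1 - 1/K) * (M - m0) := mul_nonneg hθ (by linarith)
    linarith
  -- main case
  have hAw : ∀ i, 0 < A.mulVec w i := mulVec_pos hA hwnn hw0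
  have hAw' : ∀ i, 0 < A.mulVec w' i := mulVec_pos hA hw'nn hw'0
  set lam : ℝ := rmin (A.mulVec w) (A.mulVec v₀) with hlam
  set mu : ℝ := rmin (A.mulVec w') (A.mulVec v₀) with hmu
  have hlampos : 0 < lam := rmin_pos hAw hAv
  have hmupos : 0 < mu := rmin_pos hAw' hAv
  have hlamup : ∀ i, A.mulVec w i ≤ K * lam * A.mulVec v₀ i := by
    intro i
    have h1 := le_trans (le_rmax (A.mulVec w) (A.mulVec v₀) i) (hcomp w hwnn hw0)
    exact (div_le_iff₀ (hAv i)).1 h1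
  have hmuup : ∀ i, A.mulVec w' i ≤ K * mu * A.mulVec v₀ i := by
    intro i
    have h1 := le_trans (le_rmax (A.mulVec w') (A.mulVec v₀) i) (hcomp w' hw'nn hw'0)
    exact (div_le_iff₀ (hAv i)).1 h1
  have hlamlow : ∀ i, lam * A.mulVec v₀ i ≤ A.mulVec w i := fun i =>
    (le_div_iff₀ (hAv i)).1 (rmin_le (A.mulVec w) (A.mulVec v₀) i)
  have hmulow : ∀ i, mu * A.mulVec v₀ i ≤ A.mulVec w' i := fun i =>
    (le_div_iff₀ (hAv i)).1 (rmin_le (A.mulVec w') (A.mulVec v₀) i)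
  -- rmin (Au)(Av) ≥ m0 + lam
  have hrminlow : m0 + lam ≤ rmin (A.mulVec u) (A.mulVec v₀) := by
    refine le_rmin fun i => (le_div_iff₀ (hAv i)).2 ?_
    have := hlamlow i
    rw [hdecomp i]; ring_nf; ring_nf at this ⊢; nlinarith [hAv i]
  have hrmaxup : rmax (A.mulVec u) (A.mulVec v₀) ≤ M - mu := by
    refine rmax_le fun i => (div_le_iff₀ (hAv i)).2 ?_
    have := hmulow i
    rw [hdecomp' i]; nlinarith [hAv i]
  -- M - m0 ≤ K * (lam + mu)
  have hsum : M - m0 ≤ K * (lam + mu) := by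
    obtain ⟨i⟩ := ‹Nonempty m›
    have h1 := hdecomp i
    have h2 := hdecomp' i
    have h3 := hlamup i
    have h4 := hmuup i
    have h5 := hAv i
    nlinarith
  have hdivK : (M - m0) / K ≤ lam + mu := by
    rw [div_le_iff₀ hK0]; nlinarith
  have final : rmax (A.mulVec u) (A.mulVec v₀) - rmin (A.mulVec u) (A.mulVec v₀) ≤
      (M - m0) - (lam + mu) := by linarith
  have : (1 - 1/K) * (M - m0) = (M - m0) - (M - m0)/K := by ring
  rw [this]
  linarith

end aux

noncomputable def chainAux (d : ℕ → ℕ) (A : ∀ n : ℕ, Matrix (Fin (d n)) (Fin (d (n + 1))) ℝ)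
    (m : ℕ) : (k : ℕ) → Fin (d k) → ℝ
  | k => if h : m ≤ k then (fun _ => 1) else (A k).mulVec (chainAux d A m (k + 1))
termination_by k => m - k
decreasing_by omega

lemma chainAux_ge (d : ℕ → ℕ) (A : ∀ n : ℕ, Matrix (Fin (d n)) (Fin (d (n + 1))) ℝ)
    {m k : ℕ} (h : m ≤ k) : chainAux d A m k = fun _ => 1 := by
  rw [chainAux, dif_pos h]

lemma chainAux_lt (d : ℕ → ℕ) (A : ∀ n : ℕ, Matrix (Fin (d n)) (Fin (d (n + 1))) ℝ)
    {m k : ℕ} (h : k < m) : chainAux d A m k = (A k).mulVec (chainAux d A m (k + 1)) := by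
  rw [chainAux, dif_neg (by omega)]

lemma chainAux_pos (d : ℕ → ℕ) (hd : ∀ n, 0 < d n)
    (A : ∀ n : ℕ, Matrix (Fin (d n)) (Fin (d (n + 1))) ℝ) (hA : ∀ n i j, 0 < A n i j)
    (m : ℕ) : ∀ k i, 0 < chainAux d A m k i := by
  have main : ∀ j k, m - k ≤ j → ∀ i, 0 < chainAux d A m k i := by
    intro j
    induction j with
    | zero =>
      intro k hk i
      rw [chainAux_ge d A (by omega)]
      exact one_pos
    | succ j ih =>
      intro k hk i
      by_cases h : m ≤ k
      · rw [chainAux_ge d A h]; exact one_pos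
      · rw [chainAux_lt d A (by omega)]
        haveI : Nonempty (Fin (d (k + 1))) := Fin.pos_iff_nonempty.1 (hd (k + 1))
        apply mulVec_pos (hA k) (fun j' => (ih (k + 1) (by omega) j').le)
        exact vec_ne_zero (ih (k + 1) (by omega))
  exact fun k => main (m - k) k le_rfl

theorem stmt_10 (d : ℕ → ℕ) (hd : ∀ n, 0 < d n)
    (A : ∀ n : ℕ, Matrix (Fin (d n)) (Fin (d (n + 1))) ℝ)
    (hA : ∀ n i j, 0 < A n i j)
    (D₀ : ℝ) (hD₀ : 0 < D₀) (hbound : ∀ n, hilbertDiam (A n) ≤ D₀) :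
    ∃ x : ∀ n : ℕ, Fin (d n) → ℝ, (∀ n i, 0 ≤ x n i) ∧
      {z : ∀ n : ℕ, Fin (d n) → ℝ |
          (∀ n i, 0 ≤ z n i) ∧ ∀ n, z n = (A n).mulVec (z (n + 1))} =
        {z : ∀ n : ℕ, Fin (d n) → ℝ | ∃ l : ℝ, 0 ≤ l ∧ z = fun n => l • x n} := by
  classical
  have instNE : ∀ n, Nonempty (Fin (d n)) := fun n => Fin.pos_iff_nonempty.1 (hd n)
  set X := ∀ n : ℕ, Fin (d n) → ℝ with hX
  -- minimal entries
  set a : ℕ → ℝ := fun n => Finset.univ.inf' (Finset.univ_nonempty_iff.mpr (instNE n))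
    (fun i => Finset.univ.inf' (Finset.univ_nonempty_iff.mpr (instNE (n + 1)))
      (fun j => A n i j)) with ha
  have hale : ∀ n i j, a n ≤ A n i j := by
    intro n i j
    exact le_trans (Finset.inf'_le _ (Finset.mem_univ i))
      (Finset.inf'_le (fun j => A n i j) (Finset.mem_univ j))
  have hapos : ∀ n, 0 < a n := by
    intro n
    obtain ⟨i, -, hi⟩ := Finset.exists_mem_eq_inf' (Finset.univ_nonempty_iff.mpr (instNE n))
      (fun i => Finset.univ.inf' (Finset.univ_nonempty_iff.mpr (instNE (n + 1)))
        (fun j => A n i j))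
    obtain ⟨j, -, hj⟩ := Finset.exists_mem_eq_inf'
      (Finset.univ_nonempty_iff.mpr (instNE (n + 1))) (fun j => A n i j)
    rw [ha]; simp only []; rw [hi, hj]; exact hA n i j
  -- bounds R
  set R : ℕ → ℝ := fun n => Nat.rec (motive := fun _ => ℝ) 1 (fun k Rk => Rk / a k) n with hR
  have hR0 : R 0 = 1 := rfl
  have hRsucc : ∀ n, R (n + 1) = R n / a n := fun n => rfl
  have hRpos : ∀ n, 0 < R n := by
    intro n
    induction n with
    | zero => rw [hR0]; exact one_pos
    | succ n ih => rw [hRsucc]; exact div_pos ih (hapos n)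
  -- the nested closed sets
  set Z : ℕ → Set X := fun mm =>
    {z : X | ∀ n i, 0 ≤ z n i ∧ z n i ≤ R n} ∩ {z : X | ∑ i, z 0 i = 1} ∩
      ⋂ (n : ℕ) (_ : n < mm), {z : X | ∀ i, z n i = (A n).mulVec (z (n + 1)) i} with hZ
  have hZmem : ∀ mm (z : X), z ∈ Z mm ↔
      ((∀ n i, 0 ≤ z n i ∧ z n i ≤ R n) ∧ ∑ i, z 0 i = 1) ∧
        ∀ n, n < mm → ∀ i, z n i = (A n).mulVec (z (n + 1)) i := by
    intro mm z
    simp [hZ, Set.mem_iInter, and_assoc]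
  -- compactness
  have hbox : IsCompact {z : X | ∀ n i, 0 ≤ z n i ∧ z n i ≤ R n} := by
    have : {z : X | ∀ n i, 0 ≤ z n i ∧ z n i ≤ R n} =
        Set.pi Set.univ (fun n => Set.pi Set.univ (fun _ : Fin (d n) => Set.Icc 0 (R n))) := by
      ext z
      constructor
      · exact fun h n _ i _ => h n i
      · exact fun h n i => h n trivial i trivial
    rw [this]
    exact isCompact_univ_pi fun n => isCompact_univ_pi fun i => isCompact_Icc
  have hclosed : ∀ mm, IsClosed (Z mm) := by
    intro mm
    refine IsClosed.inter (IsClosed.inter ?_ ?_) ?_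
    · have : {z : X | ∀ n i, 0 ≤ z n i ∧ z n i ≤ R n} =
          ⋂ (n : ℕ), ⋂ (i : Fin (d n)), {z : X | z n i ∈ Set.Icc 0 (R n)} := by
        ext z; simp [Set.mem_iInter, Set.mem_Icc]
      rw [this]
      refine isClosed_iInter fun n => isClosed_iInter fun i => ?_
      exact IsClosed.preimage ((continuous_apply i).comp (continuous_apply n)) isClosed_Icc
    · exact isClosed_eq (continuous_finset_sum _ fun i _ =>
        (continuous_apply i).comp (continuous_apply 0)) continuous_const
    · refine isClosed_iInter fun n => isClosed_iInter fun hn => ?_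
      have : {z : X | ∀ i, z n i = (A n).mulVec (z (n + 1)) i} =
          ⋂ (i : Fin (d n)), {z : X | z n i = ∑ j, A n i j * z (n + 1) j} := by
        ext z; simp [Set.mem_iInter, Matrix.mulVec, dotProduct]
      rw [this]
      refine isClosed_iInter fun i => ?_
      exact isClosed_eq ((continuous_apply i).comp (continuous_apply n))
        (continuous_finset_sum _ fun j _ =>
          continuous_const.mul ((continuous_apply j).comp (continuous_apply (n + 1))))
  have hcompact : ∀ mm, IsCompact (Z mm) := by
    intro mm
    apply IsCompact.of_isClosed_subset hbox (hclosed mm)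
    intro z hz
    exact ((hZmem mm z).1 hz).1.1
  -- nonemptiness
  have hne : ∀ mm, (Z mm).Nonempty := by
    intro mm
    set c : (k : ℕ) → Fin (d k) → ℝ := chainAux d A mm with hc
    have hcpos : ∀ k i, 0 < c k i := chainAux_pos d hd A hA mm
    set S : ℝ := ∑ i, c 0 i with hS
    have hSpos : 0 < S := Finset.sum_pos (fun i _ => hcpos 0 i) (Finset.univ_nonempty_iff.mpr (instNE 0))
    set z : X := fun n => if n ≤ mm then (fun i => c n i / S) else 0 with hz
    have hzle : ∀ n, n ≤ mm → z n = fun i => c n i / S := by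
      intro n h; rw [hz]; simp only [if_pos h]
    have hzgt : ∀ n, ¬(n ≤ mm) → z n = 0 := by
      intro n h; rw [hz]; simp only [if_neg h]
    -- upper bounds by induction
    have hub : ∀ n, n ≤ mm → ∀ i, c n i / S ≤ R n := by
      intro n
      induction n with
      | zero =>
        intro _ i
        rw [hR0, div_le_one hSpos, hS]
        exact Finset.single_le_sum (fun k _ => (hcpos 0 k).le) (Finset.mem_univ i)
      | succ n ih =>
        intro hn1 j
        have hn : n < mm := by omega
        have ihn := ih (by omega)
        obtain ⟨i0⟩ := instNE n
        have hrec : c n = (A n).mulVec (c (n + 1)) := chainAux_lt d A hn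
        have h1 : a n * c (n + 1) j ≤ c n i0 := by
          have e1 : c n i0 = ∑ k, A n i0 k * c (n + 1) k := by rw [hrec]; rfl
          have e2 : A n i0 j * c (n + 1) j ≤ ∑ k, A n i0 k * c (n + 1) k :=
            Finset.single_le_sum (fun k _ => mul_nonneg (hA n i0 k).le (hcpos (n + 1) k).le)
              (Finset.mem_univ j)
          have e3 : a n * c (n + 1) j ≤ A n i0 j * c (n + 1) j :=
            mul_le_mul_of_nonneg_right (hale n i0 j) (hcpos (n + 1) j).le
          rw [e1]; exact le_trans e3 e2
        have h2 : c n i0 ≤ R n * S := (div_le_iff₀ hSpos).1 (ihn i0)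
        rw [hRsucc, div_le_div_iff₀ hSpos (hapos n)]
        nlinarith [hcpos (n + 1) j, hapos n, hSpos]
    refine ⟨z, (hZmem mm z).2 ⟨⟨?_, ?_⟩, ?_⟩⟩
    · intro n i
      by_cases h : n ≤ mm
      · rw [hzle n h]
        exact ⟨div_nonneg (hcpos n i).le hSpos.le, hub n h i⟩
      · rw [hzgt n h]
        exact ⟨le_refl 0, (hRpos n).le⟩
    · rw [hzle 0 (Nat.zero_le mm), ← Finset.sum_div, ← hS, div_self (ne_of_gt hSpos)]
    · intro n hn i
      rw [hzle n (by omega), hzle (n + 1) (by omega)]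
      have hrec : c n = (A n).mulVec (c (n + 1)) := chainAux_lt d A hn
      have : (A n).mulVec (fun j => c (n + 1) j / S) i = (∑ j, A n i j * c (n + 1) j) / S := by
        simp only [Matrix.mulVec, dotProduct, Finset.sum_div]
        exact Finset.sum_congr rfl fun j _ => by ring
      rw [this, hrec]
      rfl
  -- directedness and intersection
  have hmono : ∀ {m1 m2 : ℕ}, m1 ≤ m2 → Z m2 ⊆ Z m1 := by
    intro m1 m2 h z hz
    rw [hZmem] at hz ⊢
    exact ⟨hz.1, fun n hn => hz.2 n (by omega)⟩
  have hdir : Directed (· ⊇ ·) Z := fun i j =>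
    ⟨max i j, hmono (le_max_left i j), hmono (le_max_right i j)⟩
  obtain ⟨x, hx⟩ := IsCompact.nonempty_iInter_of_directed_nonempty_isCompact_isClosed Z hdir hne
    hcompact hclosed
  have hxm : ∀ mm, x ∈ Z mm := Set.mem_iInter.1 hx
  have hxnn : ∀ n i, 0 ≤ x n i := fun n i => (((hZmem 0 x).1 (hxm 0)).1.1 n i).1
  have hxsum : ∑ i, x 0 i = 1 := ((hZmem 0 x).1 (hxm 0)).1.2
  have hxrec : ∀ n, x n = (A n).mulVec (x (n + 1)) := by
    intro n
    funext i
    exact ((hZmem (n + 1) x).1 (hxm (n + 1))).2 n (by omega) i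
  have hx0ne : x 0 ≠ 0 := by
    intro h
    rw [h] at hxsum
    simp at hxsum
  -- Part 2: uniqueness of direction
  set K : ℝ := Real.exp D₀ with hKdef
  have hK1 : 1 < K := by
    rw [hKdef, show (1:ℝ) = Real.exp 0 by simp]
    exact Real.exp_lt_exp.2 hD₀
  have hKpos : 0 < K := lt_trans one_pos hK1
  have hθ0 : 0 ≤ 1 - 1/K := by
    have : 1/K ≤ 1 := by rw [div_le_one hKpos]; exact hK1.le
    linarith
  have hθ1 : 1 - 1/K < 1 := by
    have : 0 < 1/K := by positivity
    linarith
  have hxne : ∀ n, x n ≠ 0 := by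
    intro n h
    have down : ∀ k, x k = 0 → x 0 = 0 := by
      intro k
      induction k with
      | zero => exact id
      | succ k ih =>
        intro h1
        apply ih
        rw [hxrec k, h1, Matrix.mulVec_zero]
    exact hx0ne (down n h)
  have hxpos : ∀ n i, 0 < x n i := by
    intro n i
    haveI := instNE n
    rw [hxrec n]
    exact mulVec_pos (hA n) (fun j => hxnn (n + 1) j) (hxne (n + 1)) i
  have key : ∀ z : (∀ n : ℕ, Fin (d n) → ℝ), (∀ n i, 0 ≤ z n i) →
      (∀ n, z n = (A n).mulVec (z (n + 1))) → z 0 ≠ 0 →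
      ∃ c : ℝ, 0 < c ∧ ∀ n, z n = c • x n := by
    intro z hznn hzrec hz0
    have hzne : ∀ n, z n ≠ 0 := by
      intro n h
      have down : ∀ k, z k = 0 → z 0 = 0 := by
        intro k
        induction k with
        | zero => exact id
        | succ k ih => intro h1; apply ih; rw [hzrec k, h1, Matrix.mulVec_zero]
      exact hz0 (down n h)
    have hzpos : ∀ n i, 0 < z n i := by
      intro n i
      haveI := instNE n
      rw [hzrec n]
      exact mulVec_pos (hA n) (fun j => hznn (n + 1) j) (hzne (n + 1)) i
    set Ms : ℕ → ℝ := fun n => @rmax (Fin (d n)) _ (instNE n) (z n) (x n) with hMs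
    set ms : ℕ → ℝ := fun n => @rmin (Fin (d n)) _ (instNE n) (z n) (x n) with hms
    have f1 : ∀ n, ms n ≤ Ms n := fun n => by
      haveI := instNE n
      rw [hMs, hms]; exact rmin_le_rmax (z n) (x n)
    have fpos : ∀ n, 0 < ms n := fun n => by
      haveI := instNE n
      rw [hms]; exact rmin_pos (hzpos n) (hxpos n)
    have f2 : ∀ n, Ms n ≤ K * ms n := by
      intro n
      haveI := instNE n; haveI := instNE (n + 1)
      have h := ratio_bound (hA n) (hbound n) (fun j => hxnn (n + 1) j) (hxne (n + 1))
        (fun j => hznn (n + 1) j) (hzne (n + 1))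
      rw [hMs, hms]; simp only []
      rw [hzrec n, hxrec n]
      exact h
    have f3 : ∀ n, ms (n + 1) ≤ ms n := by
      intro n
      haveI := instNE n; haveI := instNE (n + 1)
      have h := rmin_le_mulVec (hA n) (hzpos (n + 1)) (hxpos (n + 1))
      rw [hms]; simp only []
      rw [hzrec n, hxrec n]
      exact h
    have f4 : ∀ n, Ms n - ms n ≤ (1 - 1/K) * (Ms (n + 1) - ms (n + 1)) := by
      intro n
      haveI := instNE n; haveI := instNE (n + 1)
      have hcomp : ∀ w : Fin (d (n + 1)) → ℝ, (∀ j, 0 ≤ w j) → w ≠ 0 →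
          rmax ((A n).mulVec w) ((A n).mulVec (x (n + 1))) ≤
            K * rmin ((A n).mulVec w) ((A n).mulVec (x (n + 1))) := by
        intro w hw hw0
        exact ratio_bound (hA n) (hbound n) (fun j => hxnn (n + 1) j) (hxne (n + 1)) hw hw0
      have h := contraction_step (hA n) hK1.le (hzpos (n + 1)) (hxpos (n + 1)) hcomp
      rw [hMs, hms]; simp only []
      rw [hzrec n, hxrec n]
      exact h
    have f5 : ∀ l k, Ms l - ms l ≤ (1 - 1/K)^k * (Ms (l + k) - ms (l + k)) := by
      intro l k
      induction k with
      | zero => simp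
      | succ k ih =>
        calc Ms l - ms l ≤ (1 - 1/K)^k * (Ms (l + k) - ms (l + k)) := ih
          _ ≤ (1 - 1/K)^k * ((1 - 1/K) * (Ms (l + k + 1) - ms (l + k + 1))) :=
              mul_le_mul_of_nonneg_left (f4 (l + k)) (pow_nonneg hθ0 k)
          _ = (1 - 1/K)^(k + 1) * (Ms (l + (k + 1)) - ms (l + (k + 1))) := by
              rw [show l + (k + 1) = l + k + 1 from rfl]; ring
    have f3' : ∀ n, ms n ≤ ms 0 := by
      intro n
      induction n with
      | zero => exact le_rfl
      | succ n ih => exact le_trans (f3 n) ih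
    have f6 : ∀ n, Ms n - ms n ≤ K * ms 0 := by
      intro n
      have h1 : Ms n ≤ K * ms n := f2 n
      have h2 : ms n ≤ ms 0 := f3' n
      nlinarith [fpos n, hKpos]
    have f7 : ∀ l, Ms l = ms l := by
      intro l
      have hle : ∀ k, Ms l - ms l ≤ (1 - 1/K)^k * (K * ms 0) := by
        intro k
        calc Ms l - ms l ≤ (1 - 1/K)^k * (Ms (l + k) - ms (l + k)) := f5 l k
          _ ≤ (1 - 1/K)^k * (K * ms 0) :=
            mul_le_mul_of_nonneg_left (f6 (l + k)) (pow_nonneg hθ0 k)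
      have htend : Filter.Tendsto (fun k => (1 - 1/K)^k * (K * ms 0)) Filter.atTop (nhds 0) := by
        have h1 := tendsto_pow_atTop_nhds_zero_of_lt_one hθ0 hθ1
        have h2 := h1.mul_const (K * ms 0)
        simpa using h2
      have hle0 : Ms l - ms l ≤ 0 := ge_of_tendsto' htend hle
      linarith [f1 l]
    have hconst : ∀ l i, z l i = ms l * x l i := by
      intro l i
      haveI := instNE l
      have h1 : z l i / x l i ≤ Ms l := by
        rw [hMs]; exact le_rmax (z l) (x l) i
      have h2 : ms l ≤ z l i / x l i := by
        rw [hms]; exact rmin_le (z l) (x l) i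
      have h3 : z l i / x l i = ms l := le_antisymm (by rw [← f7 l]; exact h1) h2
      exact (div_eq_iff (ne_of_gt (hxpos l i))).1 h3
    have hstep : ∀ l, ms (l + 1) = ms l := by
      intro l
      obtain ⟨i⟩ := instNE l
      have h1 : z l i = ms l * x l i := hconst l i
      have h2 : z l i = ms (l + 1) * x l i := by
        rw [hzrec l]
        have h : (A l).mulVec (z (l + 1)) i = ms (l + 1) * (A l).mulVec (x (l + 1)) i := by
          simp only [Matrix.mulVec, dotProduct, Finset.mul_sum]
          refine Finset.sum_congr rfl fun j _ => ?_
          rw [hconst (l + 1) j]; ring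
        rw [h, ← hxrec l]
      have h3 : ms l * x l i = ms (l + 1) * x l i := h1.symm.trans h2
      exact (mul_right_cancel₀ (ne_of_gt (hxpos l i)) h3).symm
    have hall : ∀ l, ms l = ms 0 := by
      intro l
      induction l with
      | zero => rfl
      | succ l ih => rw [hstep l, ih]
    refine ⟨ms 0, fpos 0, fun n => ?_⟩
    funext i
    rw [Pi.smul_apply, smul_eq_mul, hconst n i, hall n]
  -- final set equality
  refine ⟨x, hxnn, ?_⟩
  ext z
  simp only [Set.mem_setOf_eq]
  constructor
  · rintro ⟨hznn, hzrec⟩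
    by_cases h0 : z 0 = 0
    · have hall0 : ∀ n, z n = 0 := by
        intro n
        induction n with
        | zero => exact h0
        | succ n ih =>
          haveI := instNE n
          exact mulVec_eq_zero (hA n) (fun j => hznn (n + 1) j) (by rw [← hzrec n]; exact ih)
      exact ⟨0, le_rfl, funext fun n => by rw [hall0 n, zero_smul]⟩
    · obtain ⟨c, hc, hcz⟩ := key z hznn hzrec h0
      exact ⟨c, hc.le, funext hcz⟩
  · rintro ⟨l, hl, rfl⟩
    constructor
    · intro n i
      simp only [Pi.smul_apply, smul_eq_mul]
      exact mul_nonneg hl (hxnn n i)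
    · intro n
      show l • x n = (A n).mulVec (l • x (n + 1))
      rw [Matrix.mulVec_smul, ← hxrec n]
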